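/- For a function f : ℕ → ℕ, the following are equivalent: (i) f is a morphism N → N in HAsm, i.e. f is tracked: there exists r ∈ ℕ such that for all m ∈ !ℕ, r · m is defined and r · m ∈ !ℕ, and for all n ∈ ℕ and m ∈ ν(n), r · m ∈ ν(f n); (ii) there exists a computable function g : ℕ → List ℕ such that f n is an entry of g n for all n; (iii) there exists a computable function h : ℕ → ℕ such that f n ≤ h n for all n. -/

import Mathlib

open CategoryTheory Encodable Denumerable

namespace Herbrand

/-- Kleene application in Kleene's first pca `K₁`: `e · n`. -/
def kap (e n : ℕ) : Part ℕ := Nat.Partrec.Code.eval (ofNat Nat.Partrec.Code e) n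

/-- `kapIn r n S` : `r · n` is defined and its value lies in `S`. -/
def kapIn (r n : ℕ) (S : Set ℕ) : Prop := ∃ v ∈ kap r n, v ∈ S

/-- The list coded by a natural number (canonical bijection `ℕ ≃ List ℕ`). -/
def toL (n : ℕ) : List ℕ := ofNat (List ℕ) n

/-- The code of a list of natural numbers. -/
def ofL (l : List ℕ) : ℕ := encode l

@[simp] lemma toL_ofL (l : List ℕ) : toL (ofL l) = l := ofNat_encode l

/-- `!A` : the set of codes of lists all of whose entries lie in `A`. -/
def bang (A : Set ℕ) : Set ℕ := {n | ∀ x ∈ toL n, x ∈ A}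

/-- `m ⪯ n` : every entry of the list coded by `m` is an entry of the list coded by `n`. -/
def sle (m n : ℕ) : Prop := ∀ x ∈ toL m, x ∈ toL n

lemma sle_refl (m : ℕ) : sle m m := fun _ hx => hx

lemma sle_trans {m n k : ℕ} (h1 : sle m n) (h2 : sle n k) : sle m k :=
  fun x hx => h2 x (h1 x hx)

/-- `S` is upward closed in `!A`. -/
def UpwardClosedIn (A S : Set ℕ) : Prop :=
  ∀ m ∈ S, ∀ n ∈ bang A, sle m n → n ∈ S

/-- `↑_{!A} S` : the set of `n ∈ !A` with `m ⪯ n` for some `m ∈ S`. -/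
def upClo (A S : Set ℕ) : Set ℕ := {n | n ∈ bang A ∧ ∃ m ∈ S, sle m n}

lemma mem_bang_univ (n : ℕ) : n ∈ bang Set.univ := fun x _ => Set.mem_univ x

/-- From a partial recursive function we get a `K₁`-code for it. -/
theorem exists_kap_eq {f : ℕ →. ℕ} (hf : Nat.Partrec f) : ∃ e, ∀ n, kap e n = f n := by
  obtain ⟨c, hc⟩ := Nat.Partrec.Code.exists_code.mp hf
  exact ⟨encode c, fun n => by simp [kap, hc]⟩


/-- A Herbrand assembly over `K₁`. -/
structure HAsmObj where
  carrier : Type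
  real : Set ℕ
  rz : carrier → Set ℕ
  rz_sub : ∀ a, rz a ⊆ bang real
  rz_ne : ∀ a, (rz a).Nonempty
  rz_up : ∀ a, UpwardClosedIn real (rz a)

/-- `r ∈ ℕ` tracks the function `f` between the underlying sets of two Herbrand assemblies. -/
def Tracks (B A : HAsmObj) (f : B.carrier → A.carrier) (r : ℕ) : Prop :=
  (∀ m ∈ bang B.real, kapIn r m (bang A.real)) ∧
  ∀ b : B.carrier, ∀ m ∈ B.rz b, kapIn r m (A.rz (f b))

/-- A morphism of Herbrand assemblies: a tracked function. -/
structure HHom (B A : HAsmObj) where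
  toFun : B.carrier → A.carrier
  tracked : ∃ r, Tracks B A toFun r

theorem HHom.ext' {B A : HAsmObj} {f g : HHom B A} (h : f.toFun = g.toFun) : f = g := by
  cases f; cases g; simpa using h

theorem tracks_id_fun (B A : HAsmObj) (f : B.carrier → A.carrier)
    (h1 : ∀ m ∈ bang B.real, m ∈ bang A.real)
    (h2 : ∀ b : B.carrier, ∀ m ∈ B.rz b, m ∈ A.rz (f b)) : ∃ r, Tracks B A f r := by
  obtain ⟨e, he⟩ := exists_kap_eq (Nat.Partrec.of_primrec Nat.Primrec.id)
  exact ⟨e, fun m hm => ⟨m, by simp [he], h1 m hm⟩,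
    fun b m hm => ⟨m, by simp [he], h2 b m hm⟩⟩

theorem tracked_id (A : HAsmObj) : ∃ r, Tracks A A id r :=
  tracks_id_fun A A id (fun _ h => h) (fun _ _ h => h)

theorem tracked_comp {C B A : HAsmObj} {f : C.carrier → B.carrier} {g : B.carrier → A.carrier}
    (hf : ∃ r, Tracks C B f r) (hg : ∃ s, Tracks B A g s) : ∃ t, Tracks C A (g ∘ f) t := by
  obtain ⟨r, hr1, hr2⟩ := hf
  obtain ⟨s, hs1, hs2⟩ := hg
  refine ⟨encode (Nat.Partrec.Code.comp (ofNat Nat.Partrec.Code s) (ofNat Nat.Partrec.Code r)),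
    ?_, ?_⟩
  · intro m hm
    obtain ⟨v, hv, hv'⟩ := hr1 m hm
    obtain ⟨w, hw, hw'⟩ := hs1 v hv'
    exact ⟨w, by simp only [kap, ofNat_encode, Nat.Partrec.Code.eval]; exact Part.mem_bind_iff.mpr ⟨v, hv, hw⟩, hw'⟩
  · intro c m hm
    obtain ⟨v, hv, hv'⟩ := hr2 c m hm
    obtain ⟨w, hw, hw'⟩ := hs2 (f c) v hv'
    exact ⟨w, by simp only [kap, ofNat_encode, Nat.Partrec.Code.eval]; exact Part.mem_bind_iff.mpr ⟨v, hv, hw⟩, hw'⟩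

/-- The category `HAsm` of Herbrand assemblies over `K₁`. -/
instance : Category HAsmObj where
  Hom B A := HHom B A
  id A := ⟨id, tracked_id A⟩
  comp f g := ⟨g.toFun ∘ f.toFun, tracked_comp f.tracked g.tracked⟩
  id_comp f := HHom.ext' rfl
  comp_id f := HHom.ext' rfl
  assoc f g h := HHom.ext' rfl


/-- The Herbrand assembly `∇X = (X, ℕ, x ↦ !ℕ)`. -/
def nablaObj (X : Type) : HAsmObj where
  carrier := X
  real := Set.univ
  rz _ := bang Set.univ
  rz_sub _ := fun _ h => h
  rz_ne _ := ⟨0, mem_bang_univ 0⟩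
  rz_up _ := fun _ _ n hn _ => hn

/-- The functor `∇ : Set → HAsm`. -/
def Nabla : Type ⥤ HAsmObj where
  obj := nablaObj
  map f := ⟨f, tracks_id_fun _ _ f (fun _ h => h) (fun _ _ h => h)⟩
  map_id _ := HHom.ext' rfl
  map_comp _ _ := HHom.ext' rfl

/-- The underlying-set functor `Γ : HAsm → Set`. -/
def Gamma : HAsmObj ⥤ Type where
  obj A := A.carrier
  map f := TypeCat.ofHom f.toFun

/-- The realizability structure of the natural numbers object: `ν n = ↑_{!ℕ} {⟨n⟩}`. -/
def nuN (n : ℕ) : Set ℕ := upClo Set.univ {ofL [n]}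

/-- The natural numbers object `N = (ℕ, ℕ, ν)` of `HAsm`. -/
def NObj : HAsmObj where
  carrier := ℕ
  real := Set.univ
  rz := nuN
  rz_sub _ := fun _ hm => hm.1
  rz_ne n := ⟨ofL [n], mem_bang_univ _, ofL [n], rfl, sle_refl _⟩
  rz_up _ := fun m hm k hk hmk => ⟨hk, hm.2.choose, hm.2.choose_spec.1,
    sle_trans hm.2.choose_spec.2 hmk⟩

/-- The terminal object `1 = ({*}, ℕ, * ↦ !ℕ)` of `HAsm`. -/
def oneObj : HAsmObj := nablaObj PUnit

/-- The zero morphism `0 : 1 ⟶ N`. -/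
def zeroH : oneObj ⟶ NObj := by
  refine ⟨fun _ => (0 : ℕ), ?_⟩
  obtain ⟨e, he⟩ := exists_kap_eq (Nat.Partrec.of_primrec (Nat.Primrec.const (ofL [0])))
  exact ⟨e, fun m _ => ⟨ofL [0], by simp [he], mem_bang_univ _⟩,
    fun b m _ => ⟨ofL [0], by simp [he], mem_bang_univ _, ofL [0], rfl, sle_refl _⟩⟩

/-- The successor morphism `s : N ⟶ N`. -/
def succH : NObj ⟶ NObj := by
  refine ⟨(Nat.succ : ℕ → ℕ), ?_⟩
  have hp : Primrec (fun m : ℕ => ofL ((toL m).map Nat.succ)) :=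
    Primrec.encode.comp ((Primrec.ofNat (List ℕ)).list_map
      ((Primrec.succ.comp Primrec.snd).to₂))
  obtain ⟨e, he⟩ := exists_kap_eq (Nat.Partrec.of_primrec (Primrec.nat_iff.mp hp))
  refine ⟨e, fun m _ => ⟨ofL ((toL m).map Nat.succ), by simp [he], mem_bang_univ _⟩, ?_⟩
  rintro (n : ℕ) m hm
  refine ⟨ofL ((toL m).map Nat.succ), by simp [he], mem_bang_univ _, ofL [n + 1], rfl, ?_⟩
  intro x hx
  have hn : n ∈ toL m := hm.2.choose_spec.2 n (by
    have : hm.2.choose = ofL [n] := hm.2.choose_spec.1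
    rw [this]; simp)
  have hx' : x = n + 1 := by simpa using hx
  subst hx'
  simp only [toL_ofL, List.mem_map]
  exact ⟨n, hn, rfl⟩



/-- Max of `h` over the entries of a list, by primitive recursion on the length. -/
def lmax (h : ℕ → ℕ) (l : List ℕ) : ℕ :=
  Nat.rec (motive := fun _ => ℕ) 0 (fun k acc => max (h (l.getD k 0)) acc) l.length

lemma lmax_comp {h : ℕ → ℕ} (hh : Computable h) : Computable (lmax h) := by
  have hget : Computable₂ fun (l : List ℕ) (k : ℕ) => l.getD k 0 := (Primrec.list_getD 0).to_comp
  exact Computable.nat_rec Primrec.list_length.to_comp (Computable.const 0)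
    (Computable.to₂ ((Primrec.nat_max.to_comp).comp
      (hh.comp (hget.comp Computable.fst (Computable.fst.comp Computable.snd)))
      (Computable.snd.comp Computable.snd)))

lemma lmax_bound (h : ℕ → ℕ) {l : List ℕ} {x : ℕ} (hx : x ∈ l) : h x ≤ lmax h l := by
  obtain ⟨i, rfl⟩ := List.mem_iff_get.mp hx
  have key : ∀ k, ∀ j < k, h (l.getD j 0) ≤
      Nat.rec (motive := fun _ => ℕ) 0 (fun k acc => max (h (l.getD k 0)) acc) k := by
    intro k
    induction k with
    | zero => exact fun j hj => absurd hj (Nat.not_lt_zero j)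
    | succ k ih =>
      intro j hj
      rcases Nat.lt_succ_iff_lt_or_eq.mp hj with hj | rfl
      · exact le_trans (ih j hj) (le_max_right _ _)
      · exact le_max_left _ _
  have h1 := key l.length i i.isLt
  rwa [List.getD_eq_getElem?_getD, List.getElem?_eq_getElem i.isLt, Option.getD_some] at h1

/-- a function `f : ℕ → ℕ` is a morphism `N ⟶ N` of Herbrand assemblies iff
it is entry-wise covered by a computable list-valued function iff it is bounded by a
computable function. -/
theorem tracked_iff_bounded (f : ℕ → ℕ) :
    ((∃ r : ℕ, Tracks NObj NObj f r) ↔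
      ∃ g : ℕ → List ℕ, Computable g ∧ ∀ n, f n ∈ g n) ∧
    ((∃ r : ℕ, Tracks NObj NObj f r) ↔
      ∃ h : ℕ → ℕ, Computable h ∧ ∀ n, f n ≤ h n) := by
  have h12 : (∃ r : ℕ, Tracks NObj NObj f r) →
      ∃ g : ℕ → List ℕ, Computable g ∧ ∀ n, f n ∈ g n := by
    rintro ⟨r, _, hr2⟩
    have hk : Nat.Partrec (kap r) :=
      Nat.Partrec.Code.exists_code.mpr ⟨ofNat Nat.Partrec.Code r, rfl⟩
    have hofL : Computable (fun n : ℕ => ofL [n]) :=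
      (Primrec.encode.comp (Primrec.list_cons.comp Primrec.id (Primrec.const []))).to_comp
    have hF : Partrec (fun n : ℕ => kap r (ofL [n])) := (Partrec.nat_iff.2 hk).comp hofL
    have hmem : ∀ n : ℕ, ofL [n] ∈ NObj.rz n := fun n =>
      ⟨mem_bang_univ _, ofL [n], rfl, sle_refl _⟩
    have hdom : ∀ n : ℕ, (kap r (ofL [n])).Dom := by
      intro n
      obtain ⟨v, hv, -⟩ := hr2 n (ofL [n]) (hmem n)
      exact Part.dom_iff_mem.mpr ⟨v, hv⟩
    have hc0 : Computable (fun n => (kap r (ofL [n])).get (hdom n)) :=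
      hF.of_eq_tot fun n => Part.get_mem _
    refine ⟨fun n => toL ((kap r (ofL [n])).get (hdom n)),
      (Computable.ofNat (List ℕ)).comp hc0, fun n => ?_⟩
    obtain ⟨v, hv, -, m0, hm0, hsle⟩ := hr2 n (ofL [n]) (hmem n)
    have hveq : v = (kap r (ofL [n])).get (hdom n) := Part.mem_unique hv (Part.get_mem _)
    have hm0' : m0 = ofL [f n] := hm0
    have := hsle (f n) (by simp [hm0'])
    rwa [hveq] at this
  have h23 : (∃ g : ℕ → List ℕ, Computable g ∧ ∀ n, f n ∈ g n) →
      ∃ h : ℕ → ℕ, Computable h ∧ ∀ n, f n ≤ h n := by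
    rintro ⟨g, hg, hfg⟩
    exact ⟨fun n => lmax id (g n), (lmax_comp Computable.id).comp hg,
      fun n => lmax_bound id (hfg n)⟩
  have h31 : (∃ h : ℕ → ℕ, Computable h ∧ ∀ n, f n ≤ h n) →
      ∃ r : ℕ, Tracks NObj NObj f r := by
    rintro ⟨h, hh, hfh⟩
    have ht : Computable (fun m : ℕ => ofL (List.range (lmax h (toL m) + 1))) :=
      Computable.encode.comp ((Primrec.list_range.to_comp).comp
        (Computable.succ.comp ((lmax_comp hh).comp (Computable.ofNat (List ℕ)))))
    obtain ⟨e, he⟩ := exists_kap_eq (Partrec.nat_iff.1 ht.partrec)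
    refine ⟨e, fun m _ => ⟨ofL (List.range (lmax h (toL m) + 1)), by simp [he], mem_bang_univ _⟩, ?_⟩
    rintro (n : ℕ) m hm
    obtain ⟨-, m0, hm0, hsle⟩ := hm
    have hm0' : m0 = ofL [n] := hm0
    have hnm : n ∈ toL m := hsle n (by simp [hm0'])
    refine ⟨ofL (List.range (lmax h (toL m) + 1)), by simp [he], mem_bang_univ _, ofL [f n], rfl, ?_⟩
    intro x hx
    have hx' : x = f n := by simpa using hx
    subst hx'
    simp only [toL_ofL, List.mem_range]
    exact Nat.lt_succ_of_le (le_trans (hfh n) (lmax_bound h hnm))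
  exact ⟨⟨h12, fun h => h31 (h23 h)⟩, ⟨fun h => h23 (h12 h), h31⟩⟩


end Herbrand
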